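/- Let n ≥ 3, r = 2n/(n−2), and C₀ > 0. Let v : ℝⁿ → ℂ be locally L^r-integrable and suppose that for every cube Q ⊆ ℝⁿ and almost every x ∈ Q: |v(x)| ≤ C₀ ( (1/|Q|) ∫_{3Q} |v(y)| dy + ∫_{3Q} |x−y|^{1−n} |v(y)| dy ). Then there exist constants C₁ > 0 and κ ≥ 1, depending only on n and C₀, such that for every cube Q with side length ℓ(Q) = 1: esssup_{x ∈ Q} |v(x)| ≤ C₁ ( ∫_{κQ} |v|^r dx )^{1/r}. -/

import Mathlib

open MeasureTheory ENNReal Metric Set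

noncomputable section

abbrev Euc (n : ℕ) := EuclideanSpace ℝ (Fin n)

/-- The closed axis-parallel cube with center `z` and side length `ℓ`. -/
def cube {n : ℕ} (z : Euc n) (ℓ : ℝ) : Set (Euc n) :=
  {y | ∀ i, |y i - z i| ≤ ℓ / 2}

namespace Stmt11

variable {n : ℕ}

/-! ### Basic geometry of cubes -/

lemma dist_le_of_coord {x y : Euc n} {c : ℝ} (hc : 0 ≤ c) (h : ∀ i, |x i - y i| ≤ c) :
    dist x y ≤ Real.sqrt n * c := by
  rw [EuclideanSpace.dist_eq]
  have hsum : (∑ i, dist (x i) (y i) ^ 2) ≤ (n : ℝ) * c ^ 2 := by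
    calc ∑ i, dist (x i) (y i) ^ 2 ≤ ∑ _i : Fin n, c ^ 2 := by
          refine Finset.sum_le_sum fun i _ => ?_
          rw [Real.dist_eq]
          exact pow_le_pow_left₀ (abs_nonneg _) (h i) 2
      _ = (n : ℝ) * c ^ 2 := by simp [mul_comm]
  calc Real.sqrt (∑ i, dist (x i) (y i) ^ 2) ≤ Real.sqrt ((n : ℝ) * c ^ 2) :=
        Real.sqrt_le_sqrt hsum
    _ = Real.sqrt n * c := by
        rw [Real.sqrt_mul (Nat.cast_nonneg n), Real.sqrt_sq hc]

lemma cube_subset_closedBall {z x : Euc n} {a b R : ℝ} (hx : x ∈ cube z a)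
    (ha : 0 ≤ a) (hb : 0 ≤ b) (hab : Real.sqrt n * ((a + b) / 2) ≤ R) :
    cube z b ⊆ closedBall x R := by
  intro y hy
  rw [mem_closedBall, dist_comm]
  refine le_trans (dist_le_of_coord (by positivity) fun i => ?_) hab
  calc |x i - y i| ≤ |x i - z i| + |z i - y i| := abs_sub_le _ _ _
    _ ≤ a / 2 + b / 2 := by
        refine add_le_add (hx i) ?_
        rw [abs_sub_comm]; exact hy i
    _ = (a + b) / 2 := by ring

lemma isClosed_cube {z : Euc n} {ℓ : ℝ} : IsClosed (cube z ℓ) := by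
  have h : cube z ℓ = ⋂ i, {y : Euc n | |y i - z i| ≤ ℓ / 2} := by
    ext y; simp [cube, Set.mem_iInter]
  rw [h]
  refine isClosed_iInter fun i => ?_
  have hc : Continuous fun y : Euc n => |y i - z i| :=
    (((EuclideanSpace.proj (𝕜 := ℝ) i).continuous).sub continuous_const).abs
  exact isClosed_le hc continuous_const

lemma measurableSet_cube {z : Euc n} {ℓ : ℝ} : MeasurableSet (cube z ℓ) :=
  isClosed_cube.measurableSet

lemma cube_mono {z : Euc n} {a b : ℝ} (h : a ≤ b) : cube z a ⊆ cube z b :=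
  fun y hy i => le_trans (hy i) (by linarith)

/-- Radius used for all ball enclosures. -/
def R0 (n : ℕ) : ℝ := Real.sqrt n * (3 : ℝ) ^ (n - 2)

lemma R0_nonneg : 0 ≤ R0 n := by
  unfold R0; positivity

lemma cube_subset_ball_R0 {z x : Euc n} {a b : ℝ} (hx : x ∈ cube z a)
    (ha : 0 ≤ a) (hb : 0 ≤ b) (ha' : a ≤ (3 : ℝ) ^ (n - 2)) (hb' : b ≤ (3 : ℝ) ^ (n - 2)) :
    cube z b ⊆ closedBall x (R0 n) := by
  refine cube_subset_closedBall hx ha hb ?_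
  unfold R0
  have h1 : (a + b) / 2 ≤ (3 : ℝ) ^ (n - 2) := by linarith
  have h2 : (0:ℝ) ≤ Real.sqrt n := Real.sqrt_nonneg _
  exact mul_le_mul_of_nonneg_left h1 h2

/-! ### The constants -/

/-- The kernel exponent `α = (n-1) · s` where `s = 2n/(2n-1)`. -/
def alp (n : ℕ) : ℝ := ((n : ℝ) - 1) * ((2 * n) / (2 * n - 1))

/-- Master kernel constant. -/
def Mconst (n : ℕ) : ℝ≥0∞ :=
  ∫⁻ y in closedBall (0 : Euc n) (R0 n), ENNReal.ofReal (‖y‖ ^ (-(alp n)))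

/-- Master volume constant. -/
def Vconst (n : ℕ) : ℝ≥0∞ := volume (closedBall (0 : Euc n) (R0 n))

lemma Vconst_ne_top : Vconst n ≠ ∞ := measure_closedBall_lt_top.ne

lemma volume_cube_le_Vconst {z : Euc n} {c : ℝ} (hc : 0 ≤ c) (hc' : c ≤ (3 : ℝ) ^ (n - 2)) :
    volume (cube z c) ≤ Vconst n := by
  have hz : z ∈ cube z (0 : ℝ) := fun i => by simp
  have hsub : cube z c ⊆ closedBall z (R0 n) :=
    cube_subset_ball_R0 hz le_rfl hc (by positivity) hc'
  calc volume (cube z c) ≤ volume (closedBall z (R0 n)) := measure_mono hsub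
    _ = Vconst n := by
        unfold Vconst
        rw [Measure.addHaar_closedBall volume z R0_nonneg,
          Measure.addHaar_closedBall volume (0 : Euc n) R0_nonneg]

lemma alp_pos (hn : 3 ≤ n) : 0 < alp n := by
  have hn' : (3 : ℝ) ≤ (n : ℝ) := by exact_mod_cast hn
  unfold alp
  have h1 : (0:ℝ) < (n : ℝ) - 1 := by linarith
  have h2 : (0:ℝ) < 2 * (n:ℝ) := by linarith
  have h3 : (0:ℝ) < 2 * (n:ℝ) - 1 := by linarith
  positivity

lemma alp_lt (hn : 3 ≤ n) : alp n < (n : ℝ) := by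
  have hn' : (3 : ℝ) ≤ (n : ℝ) := by exact_mod_cast hn
  unfold alp
  have h3 : (0:ℝ) < 2 * (n:ℝ) - 1 := by linarith
  rw [← mul_div_assoc, div_lt_iff₀ h3]
  nlinarith

lemma finite_ball_rpow (hn : 3 ≤ n) {α R : ℝ} (h0 : 0 < α) (hαn : α < n) (hR : 0 ≤ R) :
    ∫⁻ y in closedBall (0 : Euc n) R, ENNReal.ofReal (‖y‖ ^ (-α)) < ∞ := by
  set μ := volume.restrict (closedBall (0 : Euc n) R) with hμ
  have hmeas : AEMeasurable (fun y : Euc n => ‖y‖ ^ (-α)) μ :=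
    (measurable_norm.pow_const _).aemeasurable
  have hnn : 0 ≤ᵐ[μ] fun y : Euc n => ‖y‖ ^ (-α) :=
    Filter.Eventually.of_forall fun y => Real.rpow_nonneg (norm_nonneg _) _
  have heq : (∫⁻ y in closedBall (0 : Euc n) R, ENNReal.ofReal (‖y‖ ^ (-α)))
      = ∫⁻ t in Ioi (0:ℝ), μ {a : Euc n | t ≤ ‖a‖ ^ (-α)} :=
    lintegral_eq_lintegral_meas_le μ hnn hmeas
  rw [heq]
  have key : ∀ t ∈ Ioi (1 : ℝ), μ {a : Euc n | t ≤ ‖a‖ ^ (-α)} ≤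
      ENNReal.ofReal (t ^ ((-α)⁻¹ * n)) * volume (ball (0 : Euc n) 1) := by
    intro t ht
    have ht1 : (1 : ℝ) < t := ht
    have ht0 : (0 : ℝ) < t := lt_trans one_pos ht1
    have hsub : {a : Euc n | t ≤ ‖a‖ ^ (-α)} ⊆ closedBall 0 (t ^ (-α)⁻¹) := by
      intro a ha
      have hna : 0 < ‖a‖ := by
        by_contra hcon
        push_neg at hcon
        have h0' : ‖a‖ = 0 := le_antisymm hcon (norm_nonneg a)
        rw [mem_setOf_eq, h0', Real.zero_rpow (neg_ne_zero.mpr h0.ne')] at ha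
        linarith
      rw [mem_closedBall_zero_iff]
      exact (Real.le_rpow_inv_iff_of_neg hna ht0 (neg_lt_zero.mpr h0)).mpr ha
    have hmS : μ {a : Euc n | t ≤ ‖a‖ ^ (-α)} ≤ volume (closedBall (0 : Euc n) (t ^ (-α)⁻¹)) :=
      le_trans (Measure.restrict_le_self _) (measure_mono hsub)
    refine le_trans hmS (le_of_eq ?_)
    rw [Measure.addHaar_closedBall volume (0 : Euc n)
      (Real.rpow_nonneg ht0.le _)]
    congr 2
    rw [finrank_euclideanSpace_fin, ← Real.rpow_natCast (t ^ (-α)⁻¹) n,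
      ← Real.rpow_mul ht0.le]
  calc ∫⁻ t in Ioi (0:ℝ), μ {a : Euc n | t ≤ ‖a‖ ^ (-α)}
      ≤ ∫⁻ t in Ioc (0:ℝ) 1 ∪ Ioi 1, μ {a : Euc n | t ≤ ‖a‖ ^ (-α)} :=
        lintegral_mono_set Ioi_subset_Ioc_union_Ioi
    _ ≤ (∫⁻ t in Ioc (0:ℝ) 1, μ {a : Euc n | t ≤ ‖a‖ ^ (-α)}) +
        ∫⁻ t in Ioi (1:ℝ), μ {a : Euc n | t ≤ ‖a‖ ^ (-α)} := lintegral_union_le _ _ _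
    _ < ∞ := by
        refine ENNReal.add_lt_top.2 ⟨?_, ?_⟩
        · calc (∫⁻ t in Ioc (0:ℝ) 1, μ {a : Euc n | t ≤ ‖a‖ ^ (-α)})
              ≤ ∫⁻ _t in Ioc (0:ℝ) 1, volume (closedBall (0 : Euc n) R) := by
                refine lintegral_mono fun t => ?_
                calc μ _ ≤ μ univ := measure_mono (subset_univ _)
                  _ = volume (closedBall (0 : Euc n) R) := by
                      rw [hμ, Measure.restrict_apply_univ]
            _ = volume (closedBall (0 : Euc n) R) * volume (Ioc (0:ℝ) 1) :=
                setLIntegral_const _ _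
            _ < ∞ := by
                refine ENNReal.mul_lt_top measure_closedBall_lt_top ?_
                simp [Real.volume_Ioc]
        · have hγ : (-α)⁻¹ * n < -1 := by
            have h1 : (-α)⁻¹ * n = -((n:ℝ) / α) := by
              rw [inv_neg, neg_mul, inv_mul_eq_div]
            rw [h1, neg_lt_neg_iff]
            rw [lt_div_iff₀ h0]
            linarith
          calc (∫⁻ t in Ioi (1:ℝ), μ {a : Euc n | t ≤ ‖a‖ ^ (-α)})
              ≤ ∫⁻ t in Ioi (1:ℝ),
                  ENNReal.ofReal (t ^ ((-α)⁻¹ * n)) * volume (ball (0 : Euc n) 1) :=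
                setLIntegral_mono' measurableSet_Ioi key
            _ = (∫⁻ t in Ioi (1:ℝ), ENNReal.ofReal (t ^ ((-α)⁻¹ * n))) *
                  volume (ball (0 : Euc n) 1) :=
                lintegral_mul_const' _ _ measure_ball_lt_top.ne
            _ < ∞ := by
                refine ENNReal.mul_lt_top ?_ measure_ball_lt_top
                exact (integrableOn_Ioi_rpow_of_lt hγ one_pos).setLIntegral_lt_top

lemma Mconst_ne_top (hn : 3 ≤ n) : Mconst n ≠ ∞ :=
  (finite_ball_rpow hn (alp_pos hn) (alp_lt hn) R0_nonneg).ne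

/-- Translation invariance and monotonicity: the Riesz-kernel integral over any set inside
`closedBall x R0` is bounded by `Mconst`. -/
lemma lintegral_kernel_le {x : Euc n} {A : Set (Euc n)} (hA : A ⊆ closedBall x (R0 n)) :
    ∫⁻ y in A, ENNReal.ofReal (dist x y ^ (-(alp n))) ≤ Mconst n := by
  calc ∫⁻ y in A, ENNReal.ofReal (dist x y ^ (-(alp n)))
      ≤ ∫⁻ y in closedBall x (R0 n), ENNReal.ofReal (dist x y ^ (-(alp n))) :=
        lintegral_mono_set hA
    _ = Mconst n := by
        unfold Mconst
        have hT : MeasurePreserving (fun y : Euc n => x + y)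
            (volume : Measure (Euc n)) volume := measurePreserving_add_left volume x
        have hTe : MeasurableEmbedding (fun y : Euc n => x + y) :=
          (MeasurableEquiv.addLeft x).measurableEmbedding
        have h := hT.setLIntegral_comp_preimage_emb hTe
          (fun y => ENNReal.ofReal (dist x y ^ (-(alp n)))) (closedBall x (R0 n))
        rw [← h]
        have hpre : (fun y : Euc n => x + y) ⁻¹' closedBall x (R0 n)
            = closedBall (0 : Euc n) (R0 n) := by
          ext u
          simp [mem_closedBall, dist_self_add_left, mem_closedBall_zero_iff]
        rw [hpre]
        refine setLIntegral_congr_fun measurableSet_closedBall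
          (fun u _ => ?_)
        rw [dist_self_add_right]

/-- The kernel raised to the power `s` is the `-α` Riesz kernel. -/
lemma kernel_pow (hn : 3 ≤ n) (x y : Euc n) :
    (ENNReal.ofReal (dist x y ^ ((1:ℝ) - (n:ℝ)))) ^ ((2*(n:ℝ))/(2*(n:ℝ)-1))
      = ENNReal.ofReal (dist x y ^ (-(alp n))) := by
  have hn' : (3 : ℝ) ≤ (n : ℝ) := by exact_mod_cast hn
  have hs : (0:ℝ) ≤ (2*(n:ℝ))/(2*(n:ℝ)-1) := by
    have h2n1 : (0:ℝ) < 2*(n:ℝ)-1 := by linarith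
    positivity
  rw [ENNReal.ofReal_rpow_of_nonneg (Real.rpow_nonneg dist_nonneg _) hs,
    ← Real.rpow_mul dist_nonneg]
  congr 1
  unfold alp
  ring

/-- Kernel bound for pairs of cubes. -/
lemma kernel_cube_bound (hn : 3 ≤ n) {z x : Euc n} {a b : ℝ} (hx : x ∈ cube z a)
    (ha : 0 ≤ a) (hb : 0 ≤ b) (ha' : a ≤ (3 : ℝ) ^ (n - 2)) (hb' : b ≤ (3 : ℝ) ^ (n - 2)) :
    ∫⁻ y in cube z b,
        (ENNReal.ofReal (dist x y ^ ((1:ℝ) - (n:ℝ)))) ^ ((2*(n:ℝ))/(2*(n:ℝ)-1))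
      ≤ Mconst n := by
  have h1 : ∀ y : Euc n, (ENNReal.ofReal (dist x y ^ ((1:ℝ) - (n:ℝ)))) ^ ((2*(n:ℝ))/(2*(n:ℝ)-1))
      = ENNReal.ofReal (dist x y ^ (-(alp n))) := fun y => kernel_pow hn x y
  simp_rw [h1]
  exact lintegral_kernel_le (cube_subset_ball_R0 hx ha hb ha' hb')

/-! ### Elementary ENNReal inequalities -/

lemma add_pow_le {a b : ℝ≥0∞} {q : ℝ} (hq : 0 ≤ q) :
    (a + b) ^ q ≤ 2 ^ q * (a ^ q + b ^ q) := by
  rcases le_total a b with h | h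
  · calc (a + b) ^ q ≤ (2 * b) ^ q := by
          refine ENNReal.rpow_le_rpow ?_ hq
          rw [two_mul]; exact add_le_add h le_rfl
      _ = 2 ^ q * b ^ q := ENNReal.mul_rpow_of_nonneg _ _ hq
      _ ≤ 2 ^ q * (a ^ q + b ^ q) := by
          exact mul_le_mul_right le_add_self _
  · calc (a + b) ^ q ≤ (2 * a) ^ q := by
          refine ENNReal.rpow_le_rpow ?_ hq
          rw [two_mul]; exact add_le_add le_rfl h
      _ = 2 ^ q * a ^ q := ENNReal.mul_rpow_of_nonneg _ _ hq
      _ ≤ 2 ^ q * (a ^ q + b ^ q) := by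
          exact mul_le_mul_right le_self_add _

/-! ### The Young-type inequality -/

lemma young (hn : 3 ≤ n) {A B : Set (Euc n)} (hA : MeasurableSet A) (hB : MeasurableSet B)
    {g : Euc n → ℝ≥0∞} (hg : Measurable g) {p q : ℝ} {M : ℝ≥0∞}
    (hp1 : 1 < p) (hq0 : 0 < 1 / q) (hpq : 1 / q = 1 / p - 1 / (2 * (n:ℝ)))
    (hMA : ∀ x ∈ A, (∫⁻ y in B,
        (ENNReal.ofReal (dist x y ^ ((1:ℝ) - (n:ℝ)))) ^ ((2*(n:ℝ))/(2*(n:ℝ)-1))) ≤ M)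
    (hMB : ∀ y ∈ B, (∫⁻ x in A,
        (ENNReal.ofReal (dist x y ^ ((1:ℝ) - (n:ℝ)))) ^ ((2*(n:ℝ))/(2*(n:ℝ)-1))) ≤ M) :
    ∫⁻ x in A, (∫⁻ y in B, ENNReal.ofReal (dist x y ^ ((1:ℝ) - (n:ℝ))) * g y) ^ q
      ≤ M ^ (q * (1 - 1/(2*(n:ℝ)))) * (∫⁻ y in B, g y ^ p) ^ (q / p) := by
  have hn' : (3 : ℝ) ≤ (n : ℝ) := by exact_mod_cast hn
  have h2n : (0:ℝ) < 2 * n := by linarith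
  have h2n1 : (0:ℝ) < 2 * (n:ℝ) - 1 := by linarith
  set s : ℝ := (2*(n:ℝ))/(2*(n:ℝ)-1) with hs_def
  have hs_pos : 0 < s := by positivity
  have hs_inv : 1/s = 1 - 1/(2*(n:ℝ)) := by
    rw [hs_def]; field_simp
  have hq_pos : 0 < q := by
    rcases lt_trichotomy q 0 with h | h | h
    · exfalso; have := one_div_neg.mpr h; linarith
    · exfalso; rw [h] at hq0; simp at hq0
    · exact h
  have hp_pos : 0 < p := lt_trans one_pos hp1
  have h1p : 1/p ≤ 1 := by
    rw [div_le_one hp_pos]; exact hp1.le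
  set θ₂ : ℝ := 1/s - 1/q with hθ₂_def
  set θ₃ : ℝ := 1/p - 1/q with hθ₃_def
  have hθ₂ : 0 ≤ θ₂ := by
    rw [hθ₂_def, hs_inv, hpq]
    have : (0:ℝ) < 1/(2*(n:ℝ)) := by positivity
    linarith
  have hθ₃ : 0 ≤ θ₃ := by
    rw [hθ₃_def, hpq]
    have : (0:ℝ) < 1/(2*(n:ℝ)) := by positivity
    linarith
  set K : Euc n → Euc n → ℝ≥0∞ :=
    fun x y => ENNReal.ofReal (dist x y ^ ((1:ℝ) - (n:ℝ))) with hK_def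
  have hKm : Measurable (fun pr : Euc n × Euc n => K pr.1 pr.2) :=
    ENNReal.measurable_ofReal.comp (measurable_dist.pow_const _)
  have hKxm : ∀ x : Euc n, Measurable (fun y => K x y) := by
    intro x
    exact ENNReal.measurable_ofReal.comp ((measurable_const.dist measurable_id).pow_const _)
  have hKym : ∀ y : Euc n, Measurable (fun x => K x y) := by
    intro y
    exact ENNReal.measurable_ofReal.comp ((measurable_id.dist measurable_const).pow_const _)
  -- pointwise identity
  have hid : ∀ x y : Euc n, K x y * g y =
      ((K x y ^ s * g y ^ p) ^ (1/q)) * ((K x y ^ s) ^ θ₂ * (g y ^ p) ^ θ₃) := by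
    intro x y
    rw [ENNReal.mul_rpow_of_nonneg _ _ hq0.le]
    rw [← ENNReal.rpow_mul, ← ENNReal.rpow_mul, ← ENNReal.rpow_mul, ← ENNReal.rpow_mul]
    rw [mul_mul_mul_comm]
    rw [← ENNReal.rpow_add_of_nonneg _ _ (by positivity) (by positivity),
      ← ENNReal.rpow_add_of_nonneg _ _ (by positivity) (by positivity)]
    have e1 : s * (1/q) + s * θ₂ = 1 := by
      have : (1:ℝ)/q + θ₂ = 1/s := by rw [hθ₂_def]; ring
      calc s * (1/q) + s * θ₂ = s * (1/q + θ₂) := by ring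
        _ = s * (1/s) := by rw [this]
        _ = 1 := by field_simp
    have e2 : p * (1/q) + p * θ₃ = 1 := by
      have : (1:ℝ)/q + θ₃ = 1/p := by rw [hθ₃_def]; ring
      calc p * (1/q) + p * θ₃ = p * (1/q + θ₃) := by ring
        _ = p * (1/p) := by rw [this]
        _ = 1 := by field_simp
    rw [e1, e2, ENNReal.rpow_one, ENNReal.rpow_one]
  set I := ∫⁻ y in B, g y ^ p with hI_def
  -- pointwise Hölder
  have hpt : ∀ x ∈ A, (∫⁻ y in B, K x y * g y) ≤
      (∫⁻ y in B, K x y ^ s * g y ^ p) ^ (1/q) * (M ^ θ₂ * I ^ θ₃) := by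
    intro x hx
    have hf : ∀ i ∈ (Finset.univ : Finset (Fin 3)),
        AEMeasurable ((![fun y => K x y ^ s * g y ^ p,
          fun y => K x y ^ s, fun y => g y ^ p] : Fin 3 → Euc n → ℝ≥0∞) i)
          (volume.restrict B) := by
      intro i _
      fin_cases i
      · exact (((hKxm x).pow_const s).mul (hg.pow_const p)).aemeasurable
      · exact ((hKxm x).pow_const s).aemeasurable
      · exact (hg.pow_const p).aemeasurable
    have hsum : ∑ i : Fin 3, (![1/q, θ₂, θ₃] : Fin 3 → ℝ) i = 1 := by
      rw [Fin.sum_univ_three]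
      simp only [Matrix.cons_val_zero, Matrix.cons_val_one, Matrix.head_cons,
        Matrix.cons_val_two, Matrix.tail_cons]
      rw [hθ₂_def, hθ₃_def, hs_inv, hpq]
      ring
    have hnn : ∀ i ∈ (Finset.univ : Finset (Fin 3)), 0 ≤ (![1/q, θ₂, θ₃] : Fin 3 → ℝ) i := by
      intro i _
      fin_cases i
      · exact hq0.le
      · exact hθ₂
      · exact hθ₃
    have Hol := ENNReal.lintegral_prod_norm_pow_le (μ := volume.restrict B)
      Finset.univ hf hsum hnn
    have hcong : (∫⁻ y in B, K x y * g y) =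
        ∫⁻ y in B, ∏ i : Fin 3, (![fun y => K x y ^ s * g y ^ p,
          fun y => K x y ^ s, fun y => g y ^ p] : Fin 3 → Euc n → ℝ≥0∞) i y
          ^ (![1/q, θ₂, θ₃] : Fin 3 → ℝ) i := by
      refine lintegral_congr fun y => ?_
      rw [Fin.prod_univ_three]
      simp only [Matrix.cons_val_zero, Matrix.cons_val_one, Matrix.head_cons,
        Matrix.cons_val_two, Matrix.tail_cons]
      rw [hid x y, mul_assoc]
    rw [hcong]
    refine le_trans Hol ?_
    rw [Fin.prod_univ_three]
    simp only [Matrix.cons_val_zero, Matrix.cons_val_one, Matrix.head_cons,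
      Matrix.cons_val_two, Matrix.tail_cons]
    rw [mul_assoc]
    refine mul_le_mul_right ?_ _
    exact mul_le_mul_left (ENNReal.rpow_le_rpow (hMA x hx) hθ₂) _
  -- integrate the q-th power
  set c : ℝ≥0∞ := (M ^ θ₂ * I ^ θ₃) ^ q with hc_def
  have huncm : Measurable (fun pr : Euc n × Euc n => K pr.1 pr.2 ^ s * g pr.2 ^ p) :=
    (hKm.pow_const s).mul ((hg.comp measurable_snd).pow_const p)
  have hFm : Measurable fun x => ∫⁻ y in B, K x y ^ s * g y ^ p :=
    Measurable.lintegral_prod_right' (f := fun pr : Euc n × Euc n => K pr.1 pr.2 ^ s * g pr.2 ^ p)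
      huncm
  calc ∫⁻ x in A, (∫⁻ y in B, K x y * g y) ^ q
      ≤ ∫⁻ x in A, (∫⁻ y in B, K x y ^ s * g y ^ p) * c := by
        refine setLIntegral_mono' hA fun x hx => ?_
        have h := ENNReal.rpow_le_rpow (hpt x hx) hq_pos.le
        rwa [ENNReal.mul_rpow_of_nonneg _ _ hq_pos.le, ← ENNReal.rpow_mul,
          one_div_mul_cancel hq_pos.ne', ENNReal.rpow_one] at h
    _ = (∫⁻ x in A, ∫⁻ y in B, K x y ^ s * g y ^ p) * c := lintegral_mul_const _ hFm
    _ = (∫⁻ y in B, ∫⁻ x in A, K x y ^ s * g y ^ p) * c := by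
        rw [lintegral_lintegral_swap huncm.aemeasurable]
    _ ≤ (∫⁻ y in B, g y ^ p * M) * c := by
        refine mul_le_mul_left (setLIntegral_mono' hB fun y hy => ?_) _
        rw [lintegral_mul_const _ ((hKym y).pow_const s)]
        rw [mul_comm]
        exact mul_le_mul_right (hMB y hy) _
    _ = (I * M) * c := by
        rw [lintegral_mul_const _ (hg.pow_const p)]
    _ = M ^ (q * (1 - 1/(2*(n:ℝ)))) * I ^ (q / p) := by
        rw [hc_def, ENNReal.mul_rpow_of_nonneg _ _ hq_pos.le, ← ENNReal.rpow_mul,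
          ← ENNReal.rpow_mul]
        have hM1 : M * M ^ (θ₂ * q) = M ^ (1 + θ₂ * q) := by
          rw [ENNReal.rpow_add_of_nonneg _ _ zero_le_one (by positivity), ENNReal.rpow_one]
        have hI1 : I * I ^ (θ₃ * q) = I ^ (1 + θ₃ * q) := by
          rw [ENNReal.rpow_add_of_nonneg _ _ zero_le_one (by positivity), ENNReal.rpow_one]
        calc I * M * (M ^ (θ₂ * q) * I ^ (θ₃ * q))
            = (M * M ^ (θ₂ * q)) * (I * I ^ (θ₃ * q)) := by ring
          _ = M ^ (1 + θ₂ * q) * I ^ (1 + θ₃ * q) := by rw [hM1, hI1]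
          _ = M ^ (q * (1 - 1/(2*(n:ℝ)))) * I ^ (q / p) := by
              congr 1
              · congr 1
                rw [hθ₂_def, hs_inv]
                field_simp
                ring
              · congr 1
                rw [hθ₃_def]
                field_simp
                ring

/-! ### The bootstrap step -/

lemma step_lemma (hn : 3 ≤ n) (z : Euc n) {g : Euc n → ℝ≥0∞} (hg : Measurable g)
    {C : ℝ≥0∞} {p q ℓ : ℝ}
    (hℓ1 : 1 ≤ ℓ) (hℓsz : 3 * ℓ ≤ (3:ℝ) ^ (n - 2))
    (hp1 : 1 < p) (hq0 : 0 < 1 / q) (hpq : 1 / q = 1 / p - 1 / (2 * (n:ℝ)))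
    (hbound : ∀ᵐ x ∂(volume : Measure (Euc n)), x ∈ cube z ℓ →
        g x ≤ C * ((ENNReal.ofReal (ℓ ^ n))⁻¹ * (∫⁻ y in cube z (3 * ℓ), g y) +
          ∫⁻ y in cube z (3 * ℓ), ENNReal.ofReal (dist x y ^ ((1:ℝ) - (n:ℝ))) * g y)) :
    ∫⁻ x in cube z ℓ, g x ^ q ≤
      C ^ q * 2 ^ q * (Vconst n ^ (q - q / p + 1) + Mconst n ^ (q * (1 - 1 / (2 * (n:ℝ))))) *
        (∫⁻ y in cube z (3 * ℓ), g y ^ p) ^ (q / p) := by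
  have hn' : (3:ℝ) ≤ (n:ℝ) := by exact_mod_cast hn
  have hq_pos : 0 < q := by
    rcases lt_trichotomy q 0 with h | h | h
    · exfalso; have := one_div_neg.mpr h; linarith
    · exfalso; rw [h] at hq0; simp at hq0
    · exact h
  have hp_pos : 0 < p := lt_trans one_pos hp1
  have h1p : 1 / p ≤ 1 := by rw [div_le_one hp_pos]; exact hp1.le
  have hℓ0 : (0:ℝ) ≤ ℓ := by linarith
  have hℓsz' : ℓ ≤ (3:ℝ) ^ (n - 2) := by linarith
  have h3ℓ0 : (0:ℝ) ≤ 3 * ℓ := by linarith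
  set B := cube z (3 * ℓ) with hB_def
  set A := cube z ℓ with hA_def
  set I := ∫⁻ y in B, g y ^ p with hI_def
  set Kg : Euc n → ℝ≥0∞ :=
    fun x => ∫⁻ y in B, ENNReal.ofReal (dist x y ^ ((1:ℝ) - (n:ℝ))) * g y with hKg_def
  have hp0' : p ≠ 0 := hp_pos.ne'
  have hpm1 : p - 1 ≠ 0 := sub_ne_zero.mpr (ne_of_gt hp1)
  have hconj : p.HolderConjugate (p / (p - 1)) := by
    refine Real.holderConjugate_iff.mpr ⟨hp1, ?_⟩
    rw [inv_div]
    field_simp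
    ring
  -- L¹–Lᵖ bound on B
  have hL1 : (∫⁻ y in B, g y) ≤ I ^ (1/p) * Vconst n ^ (1 - 1/p) := by
    have h := ENNReal.lintegral_mul_le_Lp_mul_Lq (volume.restrict B) hconj
      hg.aemeasurable (aemeasurable_const (b := (1:ℝ≥0∞)))
    simp only [Pi.mul_apply, mul_one, ENNReal.one_rpow, lintegral_one,
      Measure.restrict_apply_univ] at h
    have hexp : 1 / (p / (p - 1)) = 1 - 1/p := by field_simp
    rw [hexp] at h
    refine le_trans h (mul_le_mul_right ?_ _)
    refine ENNReal.rpow_le_rpow (volume_cube_le_Vconst h3ℓ0 hℓsz) (by linarith)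
  have hT1 : (ENNReal.ofReal (ℓ ^ n))⁻¹ * (∫⁻ y in B, g y) ≤
      I ^ (1/p) * Vconst n ^ (1 - 1/p) := by
    have hinv : (ENNReal.ofReal (ℓ ^ n))⁻¹ ≤ 1 := by
      rw [ENNReal.inv_le_one]
      exact ENNReal.one_le_ofReal.mpr (one_le_pow₀ hℓ1)
    calc (ENNReal.ofReal (ℓ ^ n))⁻¹ * (∫⁻ y in B, g y)
        ≤ 1 * ∫⁻ y in B, g y := mul_le_mul_left hinv _
      _ = ∫⁻ y in B, g y := one_mul _
      _ ≤ _ := hL1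
  -- Young
  have hY : ∫⁻ x in A, Kg x ^ q ≤ Mconst n ^ (q * (1 - 1/(2*(n:ℝ)))) * I ^ (q/p) := by
    refine young hn measurableSet_cube measurableSet_cube hg hp1 hq0 hpq ?_ ?_
    · intro x hx
      exact kernel_cube_bound hn hx hℓ0 h3ℓ0 hℓsz' hℓsz
    · intro y hy
      have h := kernel_cube_bound hn (z := z) (a := 3*ℓ) (b := ℓ) hy h3ℓ0 hℓ0 hℓsz hℓsz'
      simpa [dist_comm] using h
  have hmeasKg : Measurable Kg :=
    Measurable.lintegral_prod_right'
      (f := fun pr : Euc n × Euc n =>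
        ENNReal.ofReal (dist pr.1 pr.2 ^ ((1:ℝ) - (n:ℝ))) * g pr.2)
      ((ENNReal.measurable_ofReal.comp (measurable_dist.pow_const _)).mul
        (hg.comp measurable_snd))
  set T1 : ℝ≥0∞ := (ENNReal.ofReal (ℓ ^ n))⁻¹ * (∫⁻ y in B, g y) with hT1_def
  have hqq : (0:ℝ) ≤ q - q/p := by
    have : q / p ≤ q := by
      rw [div_le_iff₀ hp_pos]
      nlinarith
    linarith
  calc ∫⁻ x in A, g x ^ q
      ≤ ∫⁻ x in A, (C^q * 2^q) * (T1^q + Kg x ^ q) := by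
        refine setLIntegral_mono_ae' measurableSet_cube ?_
        filter_upwards [hbound] with x hx hmem
        have h1 := hx hmem
        calc g x ^ q ≤ (C * (T1 + Kg x)) ^ q := ENNReal.rpow_le_rpow h1 hq_pos.le
          _ = C^q * (T1 + Kg x)^q := ENNReal.mul_rpow_of_nonneg _ _ hq_pos.le
          _ ≤ C^q * (2^q * (T1^q + Kg x ^ q)) := mul_le_mul_right (add_pow_le hq_pos.le) _
          _ = (C^q * 2^q) * (T1^q + Kg x ^ q) := by ring
    _ = (C^q * 2^q) * ∫⁻ x in A, (T1^q + Kg x ^ q) :=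
        lintegral_const_mul _ (measurable_const.add (hmeasKg.pow_const q))
    _ = (C^q * 2^q) * (T1^q * volume A + ∫⁻ x in A, Kg x ^ q) := by
        rw [lintegral_add_left measurable_const, setLIntegral_const]
    _ ≤ (C^q * 2^q) * ((I^(1/p) * Vconst n ^ (1 - 1/p))^q * Vconst n +
          Mconst n ^ (q*(1 - 1/(2*(n:ℝ)))) * I^(q/p)) := by
        refine mul_le_mul_right (add_le_add (mul_le_mul'
          (ENNReal.rpow_le_rpow hT1 hq_pos.le)
          (volume_cube_le_Vconst hℓ0 hℓsz')) hY) _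
    _ = C^q * 2^q * (Vconst n ^ (q - q/p + 1) + Mconst n ^ (q*(1 - 1/(2*(n:ℝ))))) * I^(q/p) := by
        have hexp : (I^(1/p) * Vconst n ^ (1 - 1/p))^q = I^(q/p) * Vconst n ^ (q - q/p) := by
          rw [ENNReal.mul_rpow_of_nonneg _ _ hq_pos.le, ← ENNReal.rpow_mul, ← ENNReal.rpow_mul]
          congr 2
          · field_simp
          · field_simp
        rw [hexp]
        rw [show Vconst n ^ (q - q/p + 1) = Vconst n ^ (q - q/p) * Vconst n by
          rw [ENNReal.rpow_add_of_nonneg _ _ hqq zero_le_one, ENNReal.rpow_one]]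
        ring

/-! ### The final (essential supremum) step -/

lemma final_lemma (hn : 3 ≤ n) (z : Euc n) {g : Euc n → ℝ≥0∞} (hg : Measurable g) {C : ℝ≥0∞}
    (hbound : ∀ᵐ x ∂(volume : Measure (Euc n)), x ∈ cube z 1 →
        g x ≤ C * ((ENNReal.ofReal ((1:ℝ) ^ n))⁻¹ * (∫⁻ y in cube z (3 * 1), g y) +
          ∫⁻ y in cube z (3 * 1), ENNReal.ofReal (dist x y ^ ((1:ℝ) - (n:ℝ))) * g y)) :
    essSup g (volume.restrict (cube z 1)) ≤
      C * (Vconst n ^ (1 - 1/(2*(n:ℝ))) + Mconst n ^ (1 - 1/(2*(n:ℝ)))) *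
        (∫⁻ y in cube z (3 * 1), g y ^ (2*(n:ℝ))) ^ (1/(2*(n:ℝ))) := by
  have hn' : (3:ℝ) ≤ (n:ℝ) := by exact_mod_cast hn
  have h2n1 : (0:ℝ) < 2*(n:ℝ) - 1 := by linarith
  have h2n : (0:ℝ) < 2*(n:ℝ) := by linarith
  set s : ℝ := (2*(n:ℝ))/(2*(n:ℝ)-1) with hs_def
  have hs_inv : 1/s = 1 - 1/(2*(n:ℝ)) := by rw [hs_def]; field_simp
  set B := cube z (3 * (1:ℝ)) with hB_def
  set I := ∫⁻ y in B, g y ^ (2*(n:ℝ)) with hI_def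
  have h1sz : (1:ℝ) ≤ (3:ℝ) ^ (n - 2) := one_le_pow₀ (by norm_num)
  have h3sz : (3:ℝ) * 1 ≤ (3:ℝ) ^ (n - 2) := by
    have h1 : 1 ≤ n - 2 := by omega
    calc (3:ℝ) * 1 = 3 ^ 1 := by norm_num
      _ ≤ 3 ^ (n - 2) := pow_le_pow_right₀ (by norm_num) h1
  have hvol : volume B ≤ Vconst n := volume_cube_le_Vconst (by norm_num) h3sz
  have hconj : s.HolderConjugate (2*(n:ℝ)) := by
    refine Real.holderConjugate_iff.mpr ⟨?_, ?_⟩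
    · rw [hs_def, lt_div_iff₀ h2n1]; linarith
    · rw [hs_def, inv_div]
      field_simp
      ring
  have hes : (0:ℝ) ≤ 1 - 1/(2*(n:ℝ)) := by
    have : 1/(2*(n:ℝ)) ≤ 1 := by rw [div_le_one h2n]; linarith
    linarith
  refine essSup_le_of_ae_le _ ?_
  refine (ae_restrict_iff' measurableSet_cube).mpr ?_
  filter_upwards [hbound] with x hx hmem
  have hb := hx hmem
  have e0 : (ENNReal.ofReal ((1:ℝ) ^ n))⁻¹ = 1 := by norm_num
  rw [e0, one_mul] at hb
  have hL1 : (∫⁻ y in B, g y) ≤ Vconst n ^ (1 - 1/(2*(n:ℝ))) * I ^ (1/(2*(n:ℝ))) := by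
    have h := ENNReal.lintegral_mul_le_Lp_mul_Lq (volume.restrict B) hconj.symm
      hg.aemeasurable (aemeasurable_const (b := (1:ℝ≥0∞)))
    simp only [Pi.mul_apply, mul_one, ENNReal.one_rpow, lintegral_one,
      Measure.restrict_apply_univ] at h
    refine le_trans h ?_
    rw [mul_comm]
    refine mul_le_mul' ?_ le_rfl
    rw [← hs_inv]
    exact ENNReal.rpow_le_rpow hvol (by rw [hs_inv]; exact hes)
  have hK2 : (∫⁻ y in B, ENNReal.ofReal (dist x y ^ ((1:ℝ)-(n:ℝ))) * g y)
      ≤ Mconst n ^ (1 - 1/(2*(n:ℝ))) * I ^ (1/(2*(n:ℝ))) := by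
    have hKxm : Measurable (fun y => ENNReal.ofReal (dist x y ^ ((1:ℝ)-(n:ℝ)))) :=
      ENNReal.measurable_ofReal.comp ((measurable_const.dist measurable_id).pow_const _)
    have h := ENNReal.lintegral_mul_le_Lp_mul_Lq (volume.restrict B) hconj
      hKxm.aemeasurable hg.aemeasurable
    simp only [Pi.mul_apply] at h
    refine le_trans h ?_
    refine mul_le_mul' ?_ le_rfl
    have hkb := kernel_cube_bound hn (z := z) (a := (1:ℝ)) (b := 3*1) hmem
      (by norm_num) (by norm_num) h1sz h3sz
    rw [← hs_inv]
    exact ENNReal.rpow_le_rpow hkb (by rw [hs_inv]; exact hes)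
  calc g x ≤ C * ((∫⁻ y in B, g y) +
        ∫⁻ y in B, ENNReal.ofReal (dist x y ^ ((1:ℝ)-(n:ℝ))) * g y) := hb
    _ ≤ C * (Vconst n ^ (1 - 1/(2*(n:ℝ))) * I ^ (1/(2*(n:ℝ))) +
        Mconst n ^ (1 - 1/(2*(n:ℝ))) * I ^ (1/(2*(n:ℝ)))) :=
        mul_le_mul_right (add_le_add hL1 hK2) _
    _ = C * (Vconst n ^ (1 - 1/(2*(n:ℝ))) + Mconst n ^ (1 - 1/(2*(n:ℝ)))) * I ^ (1/(2*(n:ℝ))) := by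
        ring

/-! ### The induction -/

def pexp (n j : ℕ) : ℝ := 2 * (n:ℝ) / ((n:ℝ) - 2 - (j:ℝ))

def Hyp (n : ℕ) (C : ℝ≥0∞) (g : Euc n → ℝ≥0∞) (z : Euc n) : Prop :=
  ∀ ℓ : ℝ, 0 < ℓ → ∀ᵐ x ∂(volume : Measure (Euc n)), x ∈ cube z ℓ →
    g x ≤ C * ((ENNReal.ofReal (ℓ ^ n))⁻¹ * (∫⁻ y in cube z (3 * ℓ), g y) +
      ∫⁻ y in cube z (3 * ℓ), ENNReal.ofReal (dist x y ^ ((1:ℝ) - (n:ℝ))) * g y)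

lemma ind (hn : 3 ≤ n) (C : ℝ≥0∞) (hC : C ≠ ∞) : ∀ j : ℕ, ∃ E : ℝ≥0∞, E ≠ ∞ ∧
    ∀ (g : Euc n → ℝ≥0∞), Measurable g → ∀ z : Euc n, Hyp n C g z → j + 3 ≤ n →
      ∫⁻ x in cube z ((3:ℝ) ^ (n - 2 - j)), g x ^ (pexp n j) ≤
        E * (∫⁻ x in cube z ((3:ℝ) ^ (n - 2)), g x ^ ((2*(n:ℝ))/((n:ℝ)-2))) ^
          (pexp n j * (((n:ℝ) - 2) / (2 * (n:ℝ)))) := by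
  have hn' : (3:ℝ) ≤ (n:ℝ) := by exact_mod_cast hn
  have h2n : (0:ℝ) < 2*(n:ℝ) := by linarith
  have hn2 : (n:ℝ) - 2 ≠ 0 := by linarith
  intro j
  induction j with
  | zero =>
    refine ⟨1, one_ne_top, ?_⟩
    intro g hg z _ _
    have hp0 : pexp n 0 = (2*(n:ℝ))/((n:ℝ)-2) := by
      unfold pexp; norm_num
    have hexp : pexp n 0 * (((n:ℝ)-2)/(2*(n:ℝ))) = 1 := by
      rw [hp0]; field_simp
    rw [hexp, ENNReal.rpow_one, one_mul, hp0]
    simp only [Nat.sub_zero]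
    exact le_rfl
  | succ j IH =>
    by_cases hj : j + 4 ≤ n
    swap
    · exact ⟨1, one_ne_top, fun g hg z hyp hjn => absurd hjn (by omega)⟩
    obtain ⟨E, hEne, hE⟩ := IH
    have hj4 : (j:ℝ) + 4 ≤ (n:ℝ) := by exact_mod_cast hj
    have hdp : (2:ℝ) ≤ (n:ℝ) - 2 - (j:ℝ) := by linarith
    have hdp0 : (0:ℝ) < (n:ℝ) - 2 - (j:ℝ) := by linarith
    have hdq0 : (0:ℝ) < (n:ℝ) - 2 - ((j:ℝ) + 1) := by linarith
    have hcast : ((j+1:ℕ):ℝ) = (j:ℝ) + 1 := by push_cast; ring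
    have hpd : pexp n j = 2*(n:ℝ)/((n:ℝ)-2-(j:ℝ)) := rfl
    have hqd : pexp n (j+1) = 2*(n:ℝ)/((n:ℝ)-2-((j:ℝ)+1)) := by
      unfold pexp; rw [hcast]
    have hp1 : 1 < pexp n j := by
      rw [hpd, lt_div_iff₀ hdp0]; linarith
    have hq_pos : 0 < pexp n (j+1) := by
      rw [hqd]; positivity
    have hq0 : 0 < 1 / pexp n (j+1) := by positivity
    have hpq : 1 / pexp n (j+1) = 1 / pexp n j - 1 / (2 * (n:ℝ)) := by
      rw [hpd, hqd, one_div_div, one_div_div]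
      ring
    have hp_pos : 0 < pexp n j := lt_trans one_pos hp1
    have hqp0 : (0:ℝ) ≤ pexp n (j+1) / pexp n j := by positivity
    set q := pexp n (j+1) with hq_set
    set p := pexp n j with hp_set
    have hqq : (0:ℝ) ≤ q - q/p := by
      have h1p : 1/p ≤ 1 := by rw [div_le_one hp_pos]; exact hp1.le
      have : q / p ≤ q := by
        rw [div_le_iff₀ hp_pos]; nlinarith
      linarith
    have hD1 : C ^ q ≠ ∞ := (ENNReal.rpow_lt_top_of_nonneg hq_pos.le hC).ne
    have hD2 : (2:ℝ≥0∞) ^ q ≠ ∞ := (ENNReal.rpow_lt_top_of_nonneg hq_pos.le ENNReal.ofNat_ne_top).ne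
    have hD3 : Vconst n ^ (q - q/p + 1) ≠ ∞ :=
      (ENNReal.rpow_lt_top_of_nonneg (by linarith) Vconst_ne_top).ne
    have he2 : (0:ℝ) ≤ q * (1 - 1/(2*(n:ℝ))) := by
      have : 1/(2*(n:ℝ)) ≤ 1 := by rw [div_le_one h2n]; linarith
      have h' : (0:ℝ) ≤ 1 - 1/(2*(n:ℝ)) := by linarith
      positivity
    have hD4 : Mconst n ^ (q * (1 - 1/(2*(n:ℝ)))) ≠ ∞ :=
      (ENNReal.rpow_lt_top_of_nonneg he2 (Mconst_ne_top hn)).ne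
    refine ⟨(C ^ q * 2 ^ q * (Vconst n ^ (q - q/p + 1) + Mconst n ^ (q * (1 - 1/(2*(n:ℝ)))))) *
      E ^ (q/p), ?_, ?_⟩
    · refine ENNReal.mul_ne_top (ENNReal.mul_ne_top (ENNReal.mul_ne_top hD1 hD2) ?_) ?_
      · exact ENNReal.add_ne_top.mpr ⟨hD3, hD4⟩
      · exact (ENNReal.rpow_lt_top_of_nonneg hqp0 hEne).ne
    intro g hg z hyp hjn
    have hjn' : j + 3 ≤ n := by omega
    have hℓ1 : (1:ℝ) ≤ (3:ℝ) ^ (n - 3 - j) := one_le_pow₀ (by norm_num)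
    have h3e : (3:ℝ) * (3:ℝ) ^ (n - 3 - j) = (3:ℝ) ^ (n - 2 - j) := by
      rw [← pow_succ']
      congr 1
      omega
    have hℓsz : 3 * (3:ℝ) ^ (n - 3 - j) ≤ (3:ℝ) ^ (n - 2) := by
      rw [h3e]
      exact pow_le_pow_right₀ (by norm_num) (by omega)
    have hstep := step_lemma hn z hg hℓ1 hℓsz hp1 hq0 hpq
      (hyp ((3:ℝ) ^ (n - 3 - j)) (by positivity))
    have hIH := hE g hg z hyp hjn'
    have hidx : n - 2 - (j + 1) = n - 3 - j := by omega
    rw [hidx]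
    set T := ∫⁻ x in cube z ((3:ℝ) ^ (n - 2)), g x ^ ((2*(n:ℝ))/((n:ℝ)-2)) with hT_def
    calc ∫⁻ x in cube z ((3:ℝ) ^ (n - 3 - j)), g x ^ q
        ≤ C ^ q * 2 ^ q * (Vconst n ^ (q - q/p + 1) + Mconst n ^ (q * (1 - 1/(2*(n:ℝ))))) *
          (∫⁻ y in cube z ((3:ℝ) ^ (n - 2 - j)), g y ^ p) ^ (q/p) := by
          rw [← h3e]; exact hstep
      _ ≤ C ^ q * 2 ^ q * (Vconst n ^ (q - q/p + 1) + Mconst n ^ (q * (1 - 1/(2*(n:ℝ))))) *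
          (E * T ^ (p * (((n:ℝ) - 2) / (2 * (n:ℝ))))) ^ (q/p) :=
          mul_le_mul_right (ENNReal.rpow_le_rpow hIH hqp0) _
      _ = (C ^ q * 2 ^ q * (Vconst n ^ (q - q/p + 1) + Mconst n ^ (q * (1 - 1/(2*(n:ℝ)))))) *
          E ^ (q/p) * T ^ (q * (((n:ℝ) - 2) / (2 * (n:ℝ)))) := by
          rw [ENNReal.mul_rpow_of_nonneg _ _ hqp0, ← ENNReal.rpow_mul]
          rw [show (p * (((n:ℝ) - 2) / (2 * (n:ℝ)))) * (q/p) = q * (((n:ℝ) - 2) / (2 * (n:ℝ)))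
            from by field_simp]
          ring

/-! ### The main estimate, uniform in `v` and `z` -/

lemma main_est (hn : 3 ≤ n) (C : ℝ≥0∞) (hC : C ≠ ∞) : ∃ E : ℝ≥0∞, E ≠ ∞ ∧
    ∀ (g : Euc n → ℝ≥0∞), Measurable g → ∀ z : Euc n, Hyp n C g z →
      essSup g (volume.restrict (cube z 1)) ≤
        E * (∫⁻ x in cube z ((3:ℝ) ^ (n - 2)), g x ^ ((2*(n:ℝ))/((n:ℝ)-2))) ^
          (((n:ℝ) - 2) / (2 * (n:ℝ))) := by
  obtain ⟨E, hEne, hE⟩ := ind hn C hC (n - 3)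
  have hn' : (3:ℝ) ≤ (n:ℝ) := by exact_mod_cast hn
  have h2n : (0:ℝ) < 2*(n:ℝ) := by linarith
  have hes : (0:ℝ) ≤ 1 - 1/(2*(n:ℝ)) := by
    have : 1/(2*(n:ℝ)) ≤ 1 := by rw [div_le_one h2n]; linarith
    linarith
  refine ⟨C * (Vconst n ^ (1 - 1/(2*(n:ℝ))) + Mconst n ^ (1 - 1/(2*(n:ℝ)))) *
    E ^ (1/(2*(n:ℝ))), ?_, ?_⟩
  · refine ENNReal.mul_ne_top (ENNReal.mul_ne_top hC ?_) ?_
    · exact ENNReal.add_ne_top.mpr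
        ⟨(ENNReal.rpow_lt_top_of_nonneg hes Vconst_ne_top).ne,
         (ENNReal.rpow_lt_top_of_nonneg hes (Mconst_ne_top hn)).ne⟩
    · exact (ENNReal.rpow_lt_top_of_nonneg (by positivity) hEne).ne
  intro g hg z hyp
  have hfin := final_lemma hn z hg (hyp 1 one_pos)
  have hstage := hE g hg z hyp (by omega)
  have hidx : n - 2 - (n - 3) = 1 := by omega
  have hc3 : ((n - 3 : ℕ) : ℝ) = (n:ℝ) - 3 := by
    rw [Nat.cast_sub hn]; norm_num
  have hpk : pexp n (n - 3) = 2*(n:ℝ) := by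
    unfold pexp
    rw [hc3, show (n:ℝ) - 2 - ((n:ℝ) - 3) = 1 from by ring, div_one]
  rw [hidx, hpk] at hstage
  rw [show ((3:ℝ) ^ (1:ℕ)) = ((3:ℝ) * 1) from by norm_num] at hstage
  set T := ∫⁻ x in cube z ((3:ℝ) ^ (n - 2)), g x ^ ((2*(n:ℝ))/((n:ℝ)-2)) with hT_def
  calc essSup g (volume.restrict (cube z 1))
      ≤ C * (Vconst n ^ (1 - 1/(2*(n:ℝ))) + Mconst n ^ (1 - 1/(2*(n:ℝ)))) *
        (∫⁻ y in cube z (3 * 1), g y ^ (2*(n:ℝ))) ^ (1/(2*(n:ℝ))) := hfin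
    _ ≤ C * (Vconst n ^ (1 - 1/(2*(n:ℝ))) + Mconst n ^ (1 - 1/(2*(n:ℝ)))) *
        (E * T ^ (2*(n:ℝ) * (((n:ℝ) - 2) / (2 * (n:ℝ))))) ^ (1/(2*(n:ℝ))) :=
        mul_le_mul_right (ENNReal.rpow_le_rpow hstage (by positivity)) _
    _ = C * (Vconst n ^ (1 - 1/(2*(n:ℝ))) + Mconst n ^ (1 - 1/(2*(n:ℝ)))) *
        E ^ (1/(2*(n:ℝ))) * T ^ (((n:ℝ) - 2) / (2 * (n:ℝ))) := by
        rw [ENNReal.mul_rpow_of_nonneg _ _ (by positivity), ← ENNReal.rpow_mul]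
        rw [show (2*(n:ℝ) * (((n:ℝ) - 2) / (2 * (n:ℝ)))) * (1/(2*(n:ℝ)))
          = ((n:ℝ) - 2) / (2 * (n:ℝ)) from by field_simp]
        ring

end Stmt11

/-- Self-improvement: a locally `L^r` function (`r = 2n/(n−2)`) satisfying, on every cube,
the pointwise bound by the average of `|v|` on `3Q` plus the Riesz potential of order one
of `|v|` over `3Q`, is essentially bounded on unit cubes by a dilated `L^r` average. -/
theorem statement11 (n : ℕ) (hn : 3 ≤ n) (C₀ : ℝ) (hC₀ : 0 < C₀) :
    ∃ C₁ > 0, ∃ κ : ℝ, 1 ≤ κ ∧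
      ∀ v : Euc n → ℂ, AEStronglyMeasurable v volume →
        (∀ K : Set (Euc n), IsCompact K →
          (∫⁻ x in K, ((‖v x‖₊ : ℝ≥0∞)) ^ ((2 * (n : ℝ)) / ((n : ℝ) - 2))) < ⊤) →
        (∀ (z : Euc n) (ℓ : ℝ), 0 < ℓ →
          ∀ᵐ x ∂(volume : Measure (Euc n)), x ∈ cube z ℓ →
            (‖v x‖₊ : ℝ≥0∞) ≤ ENNReal.ofReal C₀ *
              ((ENNReal.ofReal (ℓ ^ n))⁻¹ * (∫⁻ y in cube z (3 * ℓ), (‖v y‖₊ : ℝ≥0∞)) +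
                ∫⁻ y in cube z (3 * ℓ),
                  ENNReal.ofReal (dist x y ^ ((1 : ℝ) - (n : ℝ))) * (‖v y‖₊ : ℝ≥0∞))) →
      ∀ z : Euc n,
        essSup (fun x => (‖v x‖₊ : ℝ≥0∞)) (volume.restrict (cube z 1)) ≤
          ENNReal.ofReal C₁ *
            (∫⁻ x in cube z κ,
              ((‖v x‖₊ : ℝ≥0∞)) ^ ((2 * (n : ℝ)) / ((n : ℝ) - 2))) ^
              (((n : ℝ) - 2) / (2 * (n : ℝ))) := by
  obtain ⟨E, hEne, hE⟩ := Stmt11.main_est hn (ENNReal.ofReal C₀) ENNReal.ofReal_ne_top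
  refine ⟨E.toReal + 1, by positivity, (3:ℝ) ^ (n - 2), one_le_pow₀ (by norm_num), ?_⟩
  intro v hv _hloc hineq z
  have hw : AEMeasurable (fun x => (‖v x‖₊ : ℝ≥0∞)) volume := hv.aemeasurable.nnnorm.coe_nnreal_ennreal
  set g : Euc n → ℝ≥0∞ := hw.mk _ with hg_def
  have hgm : Measurable g := hw.measurable_mk
  have hgw : (fun x => (‖v x‖₊ : ℝ≥0∞)) =ᵐ[volume] g := hw.ae_eq_mk
  have hyp : Stmt11.Hyp n (ENNReal.ofReal C₀) g z := by
    intro ℓ hℓ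
    have hIeq : ∀ S : Set (Euc n), (∫⁻ y in S, ((‖v y‖₊ : ℝ≥0∞))) = ∫⁻ y in S, g y := fun S =>
      lintegral_congr_ae (ae_restrict_of_ae (hgw.mono fun y hy => hy))
    have hKeq : ∀ x : Euc n, ∀ S : Set (Euc n),
        (∫⁻ y in S, ENNReal.ofReal (dist x y ^ ((1:ℝ) - (n:ℝ))) * ((‖v y‖₊ : ℝ≥0∞)))
          = ∫⁻ y in S, ENNReal.ofReal (dist x y ^ ((1:ℝ) - (n:ℝ))) * g y := fun x S =>
      lintegral_congr_ae (ae_restrict_of_ae (hgw.mono fun y hy =>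
        congrArg (fun t => ENNReal.ofReal (dist x y ^ ((1:ℝ) - (n:ℝ))) * t) hy))
    filter_upwards [hineq z ℓ hℓ, hgw] with x hx hgx hmem
    rw [← hgx, ← hIeq, ← hKeq]
    exact hx hmem
  have h1 := hE g hgm z hyp
  have hess : essSup (fun x => (‖v x‖₊ : ℝ≥0∞)) (volume.restrict (cube z 1))
      = essSup g (volume.restrict (cube z 1)) :=
    essSup_congr_ae (ae_restrict_of_ae hgw)
  have hT : (∫⁻ x in cube z ((3:ℝ) ^ (n - 2)),
        ((‖v x‖₊ : ℝ≥0∞)) ^ ((2 * (n : ℝ)) / ((n : ℝ) - 2)))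
      = ∫⁻ x in cube z ((3:ℝ) ^ (n - 2)), g x ^ ((2 * (n : ℝ)) / ((n : ℝ) - 2)) :=
    lintegral_congr_ae (ae_restrict_of_ae (hgw.mono fun y hy =>
      congrArg (fun t => t ^ ((2 * (n : ℝ)) / ((n : ℝ) - 2))) hy))
  rw [hess, hT]
  refine le_trans h1 (mul_le_mul_left ?_ _)
  rw [ENNReal.ofReal_add ENNReal.toReal_nonneg zero_le_one, ENNReal.ofReal_toReal hEne,
    ENNReal.ofReal_one]
  exact le_self_add
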